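/- For any N, R ≥ 3 with N ≥ R ≥ log N, there exists an N-vertex R-uniform hypergraph H such that: (i) |E(H)| ≥ N² / R^{8√(log_R N)}; (ii) H is linear (any two distinct edges meet in at most one vertex); (iii) H is triangle-free (any three distinct edges pairwise meeting in single vertices have a common vertex). -/

import Mathlib

open Finset

lemma nocarry (Q : ℕ) :
    ∀ (d : ℕ) (c : ℕ → ℤ), (∀ j, j < d → 2 * (c j).natAbs < Q) →
      (∑ j ∈ Finset.range d, c j * (Q:ℤ)^j = 0) → ∀ j, j < d → c j = 0 := by
  intro d
  induction d with
  | zero => intro c _ _ j hj; omega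
  | succ n ih =>
    intro c hc hsum j hj
    rw [Finset.sum_range_succ'] at hsum
    have h0 : (∑ i ∈ Finset.range n, c (i+1) * (Q:ℤ)^(i+1)) + c 0 * (Q:ℤ)^0 = 0 := hsum
    have hQpos : 0 < Q := by
      have := hc 0 (by omega); omega
    have hfac : ∀ i, c (i+1) * (Q:ℤ)^(i+1) = (Q:ℤ) * (c (i+1) * (Q:ℤ)^i) := by
      intro i; ring
    rw [Finset.sum_congr rfl (fun i _ => hfac i), ← Finset.mul_sum] at h0
    set T := ∑ i ∈ Finset.range n, c (i+1) * (Q:ℤ)^i with hT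
    have hc0 : c 0 = -((Q:ℤ) * T) := by linarith [h0]
    have hdvd : (Q:ℤ) ∣ c 0 := ⟨-T, by rw [hc0]; ring⟩
    have habs : |c 0| < (Q:ℤ) := by
      have := hc 0 (by omega)
      rw [Int.abs_eq_natAbs]
      exact_mod_cast by omega
    have hc00 : c 0 = 0 := by
      rcases hdvd with ⟨k, hk⟩
      by_contra h
      have : (Q:ℤ) ≤ |c 0| := by
        rw [hk]
        rw [abs_mul]
        have hk0 : k ≠ 0 := by rintro rfl; simp at hk; exact h (by omega)
        have : (1:ℤ) ≤ |k| := Int.one_le_abs (by simpa using hk0)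
        have hQ : |(Q:ℤ)| = (Q:ℤ) := abs_of_nonneg (by positivity)
        nlinarith [abs_nonneg k, abs_nonneg ((Q:ℤ))]
      omega
    have hTzero : T = 0 := by
      rw [hc00] at hc0
      have : (Q:ℤ) * T = 0 := by linarith
      rcases mul_eq_zero.1 this with h | h
      · exfalso; have : (0:ℤ) < Q := by exact_mod_cast hQpos
        omega
      · exact h
    rcases Nat.eq_zero_or_pos j with rfl | hjpos
    · exact hc00
    · obtain ⟨i, rfl⟩ : ∃ i, j = i + 1 := ⟨j - 1, by omega⟩
      exact ih (fun i => c (i+1)) (fun i hi => hc (i+1) (by omega)) hTzero i (by omega)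

lemma Hhelp (d : ℕ) (σ τ : ℤ) (hσ : 0 < σ)
    (y z w : ℕ → ℤ) (a b e : ℤ) (ha : 0 < a) (hb : 0 < b)
    (hys : ∑ j ∈ range d, y j = σ) (hzs : ∑ j ∈ range d, z j = σ)
    (hws : ∑ j ∈ range d, w j = σ)
    (hyq : ∑ j ∈ range d, (y j)^2 = τ) (hzq : ∑ j ∈ range d, (z j)^2 = τ)
    (hwq : ∑ j ∈ range d, (w j)^2 = τ)
    (heq : ∀ j, j < d → a * y j + b * z j = e * w j) :
    ∀ j, j < d → y j = z j ∧ y j = w j := by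
  have hsum : ∑ j ∈ range d, (a * y j + b * z j) = ∑ j ∈ range d, e * w j :=
    Finset.sum_congr rfl (fun j hj => heq j (Finset.mem_range.1 hj))
  rw [Finset.sum_add_distrib, ← Finset.mul_sum, ← Finset.mul_sum, ← Finset.mul_sum,
    hys, hzs, hws] at hsum
  have he : e = a + b := by
    have : (a + b - e) * σ = 0 := by ring_nf; linarith
    rcases mul_eq_zero.1 this with h | h
    · linarith
    · exfalso; omega
  subst he
  have hsq : ∑ j ∈ range d, (a * y j + b * z j)^2 = ∑ j ∈ range d, ((a+b) * w j)^2 :=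
    Finset.sum_congr rfl (fun j hj => by rw [heq j (Finset.mem_range.1 hj)])
  have hexp : ∀ j, (a * y j + b * z j)^2
      = a^2 * (y j)^2 + 2*a*b*(y j * z j) + b^2 * (z j)^2 := by intro j; ring
  have hexp2 : ∀ j, ((a+b) * w j)^2 = (a+b)^2 * (w j)^2 := by intro j; ring
  rw [Finset.sum_congr rfl (fun j _ => hexp j), Finset.sum_congr rfl (fun j _ => hexp2 j)] at hsq
  rw [Finset.sum_add_distrib, Finset.sum_add_distrib, ← Finset.mul_sum, ← Finset.mul_sum,
    ← Finset.mul_sum, ← Finset.mul_sum, hyq, hzq, hwq] at hsq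
  have hD : ∑ j ∈ range d, y j * z j = τ := by
    have h2ab : (0:ℤ) < 2*a*b := by positivity
    nlinarith [hsq]
  have hzero : ∑ j ∈ range d, (y j - z j)^2 = 0 := by
    have : ∀ j, (y j - z j)^2 = (y j)^2 - 2*(y j * z j) + (z j)^2 := by intro j; ring
    rw [Finset.sum_congr rfl (fun j _ => this j)]
    rw [Finset.sum_add_distrib, Finset.sum_sub_distrib, ← Finset.mul_sum, hyq, hzq, hD]
    ring
  have hyz : ∀ j, j < d → y j = z j := by
    intro j hj
    have hnn : ∀ i ∈ range d, (0:ℤ) ≤ (y i - z i)^2 := fun i _ => sq_nonneg _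
    have := (Finset.sum_eq_zero_iff_of_nonneg hnn).1 hzero j (Finset.mem_range.2 hj)
    have := pow_eq_zero_iff (n := 2) (by norm_num) |>.1 this
    linarith [sub_eq_zero.1 this]
  intro j hj
  refine ⟨hyz j hj, ?_⟩
  have h1 := heq j hj
  rw [hyz j hj] at h1 ⊢
  have : (a + b) * z j = (a + b) * w j := by linarith
  have hab : a + b ≠ 0 := by positivity
  exact (mul_left_cancel₀ hab this) ▸ rfl

lemma master (d : ℕ) (σ τ : ℤ) (hσ : 0 < σ)
    (y1 y2 y3 : ℕ → ℤ)
    (h1s : ∑ j ∈ range d, y1 j = σ) (h2s : ∑ j ∈ range d, y2 j = σ)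
    (h3s : ∑ j ∈ range d, y3 j = σ)
    (h1q : ∑ j ∈ range d, (y1 j)^2 = τ) (h2q : ∑ j ∈ range d, (y2 j)^2 = τ)
    (h3q : ∑ j ∈ range d, (y3 j)^2 = τ)
    (c1 c2 c3 : ℤ) (hc1 : c1 ≠ 0) (hc2 : c2 ≠ 0) (hc3 : c3 ≠ 0)
    (heq : ∀ j, j < d → c1 * y1 j + c2 * y2 j + c3 * y3 j = 0) :
    ∀ j, j < d → y1 j = y2 j ∧ y2 j = y3 j := by
  have hsum : ∑ j ∈ range d, (c1 * y1 j + c2 * y2 j + c3 * y3 j) = 0 :=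
    Finset.sum_eq_zero (fun j hj => heq j (Finset.mem_range.1 hj))
  rw [Finset.sum_add_distrib, Finset.sum_add_distrib, ← Finset.mul_sum, ← Finset.mul_sum,
    ← Finset.mul_sum, h1s, h2s, h3s] at hsum
  have hc123 : c1 + c2 + c3 = 0 := by
    have : (c1 + c2 + c3) * σ = 0 := by ring_nf; ring_nf at hsum; linarith
    rcases mul_eq_zero.1 this with h | h
    · exact h
    · omega
  rcases lt_or_gt_of_ne hc1 with h1 | h1 <;> rcases lt_or_gt_of_ne hc2 with h2 | h2 <;>
    rcases lt_or_gt_of_ne hc3 with h3 | h3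
  · -- all neg : impossible
    omega
  · -- c1<0, c2<0, c3>0 : (-c1) y1 + (-c2) y2 = c3 y3
    have H := Hhelp d σ τ hσ y1 y2 y3 (-c1) (-c2) c3 (by omega) (by omega)
      h1s h2s h3s h1q h2q h3q
      (fun j hj => by have := heq j hj; ring_nf; ring_nf at this; linarith)
    intro j hj
    obtain ⟨e1, e2⟩ := H j hj
    exact ⟨e1, by omega⟩
  · -- c1<0, c2>0, c3<0 : c2 y2 = (-c1) y1 + (-c3) y3 :  Hhelp y1 y3 y2
    have H := Hhelp d σ τ hσ y1 y3 y2 (-c1) (-c3) c2 (by omega) (by omega)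
      h1s h3s h2s h1q h3q h2q
      (fun j hj => by have := heq j hj; ring_nf; ring_nf at this; linarith)
    intro j hj
    obtain ⟨e1, e2⟩ := H j hj  -- y1 = y3, y1 = y2
    refine ⟨e2.symm ▸ rfl, by omega⟩
  · -- c1<0, c2>0, c3>0 : c2 y2 + c3 y3 = (-c1) y1 : Hhelp y2 y3 y1
    have H := Hhelp d σ τ hσ y2 y3 y1 c2 c3 (-c1) (by omega) (by omega)
      h2s h3s h1s h2q h3q h1q
      (fun j hj => by have := heq j hj; ring_nf; ring_nf at this; linarith)
    intro j hj
    obtain ⟨e1, e2⟩ := H j hj  -- y2 = y3, y2 = y1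
    exact ⟨by omega, e1⟩
  · -- c1>0, c2<0, c3<0 : c1 y1 = (-c2) y2 + (-c3) y3 : Hhelp y2 y3 y1
    have H := Hhelp d σ τ hσ y2 y3 y1 (-c2) (-c3) c1 (by omega) (by omega)
      h2s h3s h1s h2q h3q h1q
      (fun j hj => by have := heq j hj; ring_nf; ring_nf at this; linarith)
    intro j hj
    obtain ⟨e1, e2⟩ := H j hj
    exact ⟨by omega, e1⟩
  · -- c1>0, c2<0, c3>0 : c1 y1 + c3 y3 = (-c2) y2 : Hhelp y1 y3 y2
    have H := Hhelp d σ τ hσ y1 y3 y2 c1 c3 (-c2) (by omega) (by omega)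
      h1s h3s h2s h1q h3q h2q
      (fun j hj => by have := heq j hj; ring_nf; ring_nf at this; linarith)
    intro j hj
    obtain ⟨e1, e2⟩ := H j hj
    exact ⟨e2, by omega⟩
  · -- c1>0, c2>0, c3<0 : c1 y1 + c2 y2 = (-c3) y3
    have H := Hhelp d σ τ hσ y1 y2 y3 c1 c2 (-c3) (by omega) (by omega)
      h1s h2s h3s h1q h2q h3q
      (fun j hj => by have := heq j hj; ring_nf; ring_nf at this; linarith)
    intro j hj
    obtain ⟨e1, e2⟩ := H j hj
    exact ⟨e1, by omega⟩
  · omega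

/-- `s` is a valid difference: digit expansion in base `Q` with digits in `[1,m]`,
digit sum `σ`, digit square-sum `τ`. -/
def Good (d m Q σ τ s : ℕ) : Prop :=
  ∃ Y : ℕ → ℕ, (∀ j, j < d → 1 ≤ Y j ∧ Y j ≤ m) ∧
    (∑ j ∈ range d, Y j = σ) ∧ (∑ j ∈ range d, (Y j)^2 = τ) ∧
    s = ∑ j ∈ range d, Y j * Q^j

section good
variable {R d m Q σ τ : ℕ} (hQ : Q = 6*R*m) (hd : 1 ≤ d) (hR : 1 ≤ R)

-- two-term relation
lemma P2 (hQ : Q = 6*R*m) (hd : 1 ≤ d) (hR : 1 ≤ R) {s1 s2 : ℕ}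
    (g1 : Good d m Q σ τ s1) (g2 : Good d m Q σ τ s2)
    (c1 c2 : ℤ) (hc1 : c1 ≠ 0) (hb1 : c1.natAbs < R) (hb2 : c2.natAbs < R)
    (hrel : c1 * s1 + c2 * s2 = 0) : s1 = s2 := by
  obtain ⟨Y1, hY1, hs1, hq1, hv1⟩ := g1
  obtain ⟨Y2, hY2, hs2, hq2, hv2⟩ := g2
  have hm : 1 ≤ m := le_trans (hY1 0 (by omega)).1 (hY1 0 (by omega)).2
  -- digitwise
  have hdig : ∀ j, j < d → c1 * (Y1 j : ℤ) + c2 * (Y2 j : ℤ) = 0 := by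
    have hsum : ∑ j ∈ range d, (c1 * (Y1 j : ℤ) + c2 * (Y2 j : ℤ)) * (Q:ℤ)^j = 0 := by
      have e1 : (s1 : ℤ) = ∑ j ∈ range d, (Y1 j : ℤ) * (Q:ℤ)^j := by
        rw [hv1]; push_cast; ring
      have e2 : (s2 : ℤ) = ∑ j ∈ range d, (Y2 j : ℤ) * (Q:ℤ)^j := by
        rw [hv2]; push_cast; ring
      have : ∑ j ∈ range d, (c1 * (Y1 j:ℤ) + c2 * (Y2 j:ℤ)) * (Q:ℤ)^j
          = c1 * (s1:ℤ) + c2 * (s2:ℤ) := by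
        rw [e1, e2, Finset.mul_sum, Finset.mul_sum, ← Finset.sum_add_distrib]
        exact Finset.sum_congr rfl (fun j _ => by ring)
      rw [this, hrel]
    refine nocarry Q d _ ?_ hsum
    intro j hj
    have b1 := hY1 j hj; have b2 := hY2 j hj
    have : (c1 * (Y1 j:ℤ) + c2 * (Y2 j:ℤ)).natAbs ≤ c1.natAbs * Y1 j + c2.natAbs * Y2 j := by
      calc (c1 * (Y1 j:ℤ) + c2 * (Y2 j:ℤ)).natAbs
          ≤ (c1 * (Y1 j:ℤ)).natAbs + (c2 * (Y2 j:ℤ)).natAbs := Int.natAbs_add_le _ _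
        _ = c1.natAbs * Y1 j + c2.natAbs * Y2 j := by
            rw [Int.natAbs_mul, Int.natAbs_mul]; simp
    have hle : c1.natAbs * Y1 j + c2.natAbs * Y2 j ≤ (R-1)*m + (R-1)*m := by
      have := b1.2; have := b2.2
      exact Nat.add_le_add (Nat.mul_le_mul (by omega) b1.2) (Nat.mul_le_mul (by omega) b2.2)
    have : 2 * (c1 * (Y1 j:ℤ) + c2 * (Y2 j:ℤ)).natAbs ≤ 4 * ((R-1)*m) := by omega
    have hQ' : 4 * ((R-1)*m) < Q := by
      subst hQ
      obtain ⟨R', rfl⟩ : ∃ R', R = R' + 1 := ⟨R-1, by omega⟩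
      simp only [Nat.add_sub_cancel]
      nlinarith [hm]
    omega
  -- sum up : (c1 + c2) σ = 0
  have hσpos : 0 < σ := by
    rw [← hs1]
    have : 0 < Y1 0 := (hY1 0 (by omega)).1
    calc 0 < Y1 0 := this
      _ ≤ ∑ j ∈ range d, Y1 j :=
        Finset.single_le_sum (f := fun j => Y1 j) (fun i _ => Nat.zero_le _)
          (Finset.mem_range.2 (by omega))
  have hsσ : (c1 + c2) * (σ:ℤ) = 0 := by
    have : ∑ j ∈ range d, (c1 * (Y1 j:ℤ) + c2 * (Y2 j:ℤ)) = 0 :=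
      Finset.sum_eq_zero (fun j hj => hdig j (Finset.mem_range.1 hj))
    rw [Finset.sum_add_distrib, ← Finset.mul_sum, ← Finset.mul_sum] at this
    have e1 : ∑ j ∈ range d, (Y1 j : ℤ) = (σ:ℤ) := by rw [← hs1]; push_cast; ring
    have e2 : ∑ j ∈ range d, (Y2 j : ℤ) = (σ:ℤ) := by rw [← hs2]; push_cast; ring
    rw [e1, e2] at this; linarith
  have hc12 : c2 = -c1 := by
    rcases mul_eq_zero.1 hsσ with h | h
    · omega
    · exfalso; have : (0:ℤ) < σ := by exact_mod_cast hσpos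
      omega
  have hYeq : ∀ j, j < d → Y1 j = Y2 j := by
    intro j hj
    have := hdig j hj
    rw [hc12] at this
    have : c1 * ((Y1 j:ℤ) - (Y2 j:ℤ)) = 0 := by linarith
    rcases mul_eq_zero.1 this with h | h
    · exact absurd h hc1
    · have : (Y1 j:ℤ) = Y2 j := by linarith
      exact_mod_cast this
  rw [hv1, hv2]
  exact Finset.sum_congr rfl (fun j hj => by rw [hYeq j (Finset.mem_range.1 hj)])

-- three-term relation
lemma P3 (hQ : Q = 6*R*m) (hd : 1 ≤ d) (hR : 1 ≤ R) {s1 s2 s3 : ℕ}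
    (g1 : Good d m Q σ τ s1) (g2 : Good d m Q σ τ s2) (g3 : Good d m Q σ τ s3)
    (c1 c2 c3 : ℤ) (hc1 : c1 ≠ 0) (hc2 : c2 ≠ 0) (hc3 : c3 ≠ 0)
    (hb1 : c1.natAbs < R) (hb2 : c2.natAbs < R) (hb3 : c3.natAbs < R)
    (hrel : c1 * s1 + c2 * s2 + c3 * s3 = 0) : s1 = s2 ∧ s2 = s3 := by
  obtain ⟨Y1, hY1, hs1, hq1, hv1⟩ := g1
  obtain ⟨Y2, hY2, hs2, hq2, hv2⟩ := g2
  obtain ⟨Y3, hY3, hs3, hq3, hv3⟩ := g3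
  have hm : 1 ≤ m := le_trans (hY1 0 (by omega)).1 (hY1 0 (by omega)).2
  have hdig : ∀ j, j < d →
      c1 * (Y1 j : ℤ) + c2 * (Y2 j : ℤ) + c3 * (Y3 j : ℤ) = 0 := by
    have hsum : ∑ j ∈ range d,
        (c1 * (Y1 j : ℤ) + c2 * (Y2 j : ℤ) + c3 * (Y3 j : ℤ)) * (Q:ℤ)^j = 0 := by
      have e1 : (s1 : ℤ) = ∑ j ∈ range d, (Y1 j : ℤ) * (Q:ℤ)^j := by
        rw [hv1]; push_cast; ring
      have e2 : (s2 : ℤ) = ∑ j ∈ range d, (Y2 j : ℤ) * (Q:ℤ)^j := by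
        rw [hv2]; push_cast; ring
      have e3 : (s3 : ℤ) = ∑ j ∈ range d, (Y3 j : ℤ) * (Q:ℤ)^j := by
        rw [hv3]; push_cast; ring
      have : ∑ j ∈ range d,
          (c1 * (Y1 j:ℤ) + c2 * (Y2 j:ℤ) + c3 * (Y3 j:ℤ)) * (Q:ℤ)^j
          = c1 * (s1:ℤ) + c2 * (s2:ℤ) + c3 * (s3:ℤ) := by
        rw [e1, e2, e3, Finset.mul_sum, Finset.mul_sum, Finset.mul_sum,
          ← Finset.sum_add_distrib, ← Finset.sum_add_distrib]
        exact Finset.sum_congr rfl (fun j _ => by ring)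
      rw [this, hrel]
    refine nocarry Q d _ ?_ hsum
    intro j hj
    have b1 := hY1 j hj; have b2 := hY2 j hj; have b3 := hY3 j hj
    have h1 : (c1 * (Y1 j:ℤ)).natAbs ≤ (R-1)*m := by
      rw [Int.natAbs_mul]
      simp only [Int.natAbs_natCast]
      exact Nat.mul_le_mul (by omega) (by simpa using b1.2)
    have h2 : (c2 * (Y2 j:ℤ)).natAbs ≤ (R-1)*m := by
      rw [Int.natAbs_mul]
      exact Nat.mul_le_mul (by omega) (by simpa using b2.2)
    have h3 : (c3 * (Y3 j:ℤ)).natAbs ≤ (R-1)*m := by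
      rw [Int.natAbs_mul]
      exact Nat.mul_le_mul (by omega) (by simpa using b3.2)
    have htri : (c1 * (Y1 j:ℤ) + c2 * (Y2 j:ℤ) + c3 * (Y3 j:ℤ)).natAbs
        ≤ (c1 * (Y1 j:ℤ)).natAbs + (c2 * (Y2 j:ℤ)).natAbs + (c3 * (Y3 j:ℤ)).natAbs := by
      calc (c1 * (Y1 j:ℤ) + c2 * (Y2 j:ℤ) + c3 * (Y3 j:ℤ)).natAbs
          ≤ (c1 * (Y1 j:ℤ) + c2 * (Y2 j:ℤ)).natAbs + (c3 * (Y3 j:ℤ)).natAbs :=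
            Int.natAbs_add_le _ _
        _ ≤ _ := by
            have := Int.natAbs_add_le (c1 * (Y1 j:ℤ)) (c2 * (Y2 j:ℤ)); omega
    have hQ' : 6 * ((R-1)*m) < Q := by
      subst hQ
      obtain ⟨R', rfl⟩ : ∃ R', R = R' + 1 := ⟨R-1, by omega⟩
      simp only [Nat.add_sub_cancel]
      nlinarith [hm]
    omega
  have hσpos : (0:ℤ) < (σ:ℤ) := by
    have : 0 < σ := by
      rw [← hs1]
      calc 0 < Y1 0 := (hY1 0 (by omega)).1
        _ ≤ ∑ j ∈ range d, Y1 j :=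
          Finset.single_le_sum (f := fun j => Y1 j) (fun i _ => Nat.zero_le _)
            (Finset.mem_range.2 (by omega))
    exact_mod_cast this
  have e1s : ∑ j ∈ range d, ((Y1 j : ℤ)) = (σ:ℤ) := by rw [← hs1]; push_cast; ring
  have e2s : ∑ j ∈ range d, ((Y2 j : ℤ)) = (σ:ℤ) := by rw [← hs2]; push_cast; ring
  have e3s : ∑ j ∈ range d, ((Y3 j : ℤ)) = (σ:ℤ) := by rw [← hs3]; push_cast; ring
  have e1q : ∑ j ∈ range d, ((Y1 j : ℤ))^2 = (τ:ℤ) := by rw [← hq1]; push_cast; ring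
  have e2q : ∑ j ∈ range d, ((Y2 j : ℤ))^2 = (τ:ℤ) := by rw [← hq2]; push_cast; ring
  have e3q : ∑ j ∈ range d, ((Y3 j : ℤ))^2 = (τ:ℤ) := by rw [← hq3]; push_cast; ring
  have H := master d (σ:ℤ) (τ:ℤ) hσpos (fun j => (Y1 j:ℤ)) (fun j => (Y2 j:ℤ))
    (fun j => (Y3 j:ℤ)) e1s e2s e3s e1q e2q e3q c1 c2 c3 hc1 hc2 hc3 hdig
  constructor
  · rw [hv1, hv2]
    exact Finset.sum_congr rfl (fun j hj => by
      have h' : (Y1 j : ℤ) = (Y2 j : ℤ) := (H j (Finset.mem_range.1 hj)).1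
      have : Y1 j = Y2 j := by exact_mod_cast h'
      rw [this])
  · rw [hv2, hv3]
    exact Finset.sum_congr rfl (fun j hj => by
      have h' : (Y2 j : ℤ) = (Y3 j : ℤ) := (H j (Finset.mem_range.1 hj)).2
      have : Y2 j = Y3 j := by exact_mod_cast h'
      rw [this])

end good

def edgeAP (R s a : ℕ) : Finset ℕ := (Finset.range R).image (fun i => a + s * i)

lemma edgeAP_mem {R s a v : ℕ} : v ∈ edgeAP R s a ↔ ∃ i, i < R ∧ v = a + s * i := by
  simp [edgeAP, Finset.mem_image, eq_comm]

lemma edgeAP_card {R s a : ℕ} (hs : 1 ≤ s) : (edgeAP R s a).card = R := by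
  refine (Finset.card_image_of_injective _ ?_).trans (Finset.card_range R)
  intro i j h
  have h0 : a + s * i = a + s * j := h
  have h' : s * i = s * j := by omega
  exact Nat.eq_of_mul_eq_mul_left hs h'

lemma geomsum_le (Q : ℕ) (hQ : 2 ≤ Q) : ∀ d, 1 ≤ d → ∑ j ∈ range d, Q^j ≤ 2 * Q^(d-1) := by
  intro d
  induction d with
  | zero => omega
  | succ n ih =>
    intro _
    rcases Nat.eq_zero_or_pos n with rfl | hn
    · simp
    · rw [Finset.sum_range_succ]
      have h1 := ih hn
      have h2 : 2 * Q^(n-1) ≤ Q^n := by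
        have hn' : n - 1 + 1 = n := by omega
        calc 2 * Q^(n-1) ≤ Q * Q^(n-1) := Nat.mul_le_mul_right _ hQ
          _ = Q^n := by rw [← pow_succ']; rw [hn']
      simp only [Nat.add_sub_cancel]
      omega

lemma good_lb {d m Q σ τ s : ℕ} (hd : 1 ≤ d) (hQ2 : 2 ≤ Q) (g : Good d m Q σ τ s) :
    Q^(d-1) ≤ s ∧ s ≤ 2*m*Q^(d-1) := by
  obtain ⟨Y, hY, _, _, rfl⟩ := g
  constructor
  · calc Q^(d-1) = 1 * Q^(d-1) := (one_mul _).symm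
      _ ≤ Y (d-1) * Q^(d-1) := Nat.mul_le_mul_right _ (hY (d-1) (by omega)).1
      _ ≤ ∑ j ∈ range d, Y j * Q^j :=
        Finset.single_le_sum (f := fun j => Y j * Q^j) (fun i _ => Nat.zero_le _)
          (Finset.mem_range.2 (by omega))
  · calc ∑ j ∈ range d, Y j * Q^j
        ≤ ∑ j ∈ range d, m * Q^j :=
          Finset.sum_le_sum (fun j hj => Nat.mul_le_mul_right _ (hY j (Finset.mem_range.1 hj)).2)
      _ = m * ∑ j ∈ range d, Q^j := by rw [Finset.mul_sum]
      _ ≤ m * (2 * Q^(d-1)) := Nat.mul_le_mul_left _ (geomsum_le Q hQ2 d hd)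
      _ = 2*m*Q^(d-1) := by ring

lemma shared_two {R d m Q σ τ : ℕ} (hQ : Q = 6*R*m) (hd : 1 ≤ d) (hR : 1 ≤ R)
    {s1 s2 a1 a2 v w : ℕ}
    (g1 : Good d m Q σ τ s1) (g2 : Good d m Q σ τ s2) (hs1 : 1 ≤ s1)
    (hv1 : v ∈ edgeAP R s1 a1) (hv2 : v ∈ edgeAP R s2 a2)
    (hw1 : w ∈ edgeAP R s1 a1) (hw2 : w ∈ edgeAP R s2 a2) (hvw : v ≠ w) : s1 = s2 := by
  obtain ⟨i1, hi1, rfl⟩ := edgeAP_mem.1 hv1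
  obtain ⟨i2, hi2, he2⟩ := edgeAP_mem.1 hv2
  obtain ⟨j1, hj1, he3⟩ := edgeAP_mem.1 hw1
  obtain ⟨j2, hj2, he4⟩ := edgeAP_mem.1 hw2
  have c1ne : (i1 : ℤ) - j1 ≠ 0 := by
    intro h
    have : i1 = j1 := by omega
    subst this; exact hvw (by omega)
  have hrel : ((i1:ℤ) - j1) * s1 + (-((i2:ℤ) - j2)) * s2 = 0 := by
    have e2 : ((a1:ℤ) + s1 * i1) = (a2:ℤ) + s2 * i2 := by exact_mod_cast he2
    have e4 : ((a1:ℤ) + s1 * j1) = (a2:ℤ) + s2 * j2 := by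
      have h1 : (w:ℤ) = (a1:ℤ) + s1*j1 := by exact_mod_cast he3
      have h2 : (w:ℤ) = (a2:ℤ) + s2*j2 := by exact_mod_cast he4
      omega
    ring_nf
    ring_nf at e2 e4
    linarith
  have c2ne : (-((i2:ℤ) - j2)) ≠ 0 := by
    intro h
    rw [h] at hrel
    have : ((i1:ℤ) - j1) * s1 = 0 := by linarith
    rcases mul_eq_zero.1 this with h' | h'
    · exact c1ne h'
    · have : (0:ℤ) < s1 := by exact_mod_cast hs1
      omega
  exact P2 hQ hd hR g1 g2 _ _ c1ne (by omega) (by omega) hrel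

lemma same_s_param {R s r r' u u' v : ℕ} (hs : 1 ≤ s) (hR : 1 ≤ R)
    (hr : r < s) (hr' : r' < s)
    (hv : v ∈ edgeAP R s (r + s*(R*u))) (hv' : v ∈ edgeAP R s (r' + s*(R*u'))) :
    r = r' ∧ u = u' := by
  obtain ⟨i, hi, rfl⟩ := edgeAP_mem.1 hv
  obtain ⟨i', hi', he⟩ := edgeAP_mem.1 hv'
  have h1 : r + s*(R*u) + s*i = r + s*(R*u + i) := by ring
  have h2 : r' + s*(R*u') + s*i' = r' + s*(R*u' + i') := by ring
  rw [h1, h2] at he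
  have hrr : r = r' := by
    have m1 : (r + s*(R*u + i)) % s = r := by
      rw [Nat.add_mul_mod_self_left, Nat.mod_eq_of_lt hr]
    have m2 : (r' + s*(R*u' + i')) % s = r' := by
      rw [Nat.add_mul_mod_self_left, Nat.mod_eq_of_lt hr']
    rw [← m1, he, m2]
  subst hrr
  have hK : R*u + i = R*u' + i' := by
    have : s * (R*u + i) = s * (R*u' + i') := by omega
    exact Nat.eq_of_mul_eq_mul_left (by omega) this
  have hu : u = u' := by
    have d1 : (R*u + i) / R = u := by
      rw [Nat.mul_add_div (by omega)]
      simp [Nat.div_eq_of_lt hi]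
    have d2 : (R*u' + i') / R = u' := by
      rw [Nat.mul_add_div (by omega)]
      simp [Nat.div_eq_of_lt hi']
    rw [← d1, hK, d2]
  exact ⟨rfl, hu⟩

lemma buildE (N R d m Q U σ τ : ℕ) (S : Finset ℕ)
    (hQ : Q = 6*R*m) (hd : 1 ≤ d) (hR3 : 3 ≤ R) (hm : 1 ≤ m)
    (hUN : Q^d * U ≤ N)
    (hGood : ∀ s ∈ S, Good d m Q σ τ s) :
    ∃ E₀ : Finset (Finset ℕ),
      E₀.card = S.card * (Q^(d-1) * U) ∧
      (∀ e ∈ E₀, e.card = R) ∧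
      (∀ e ∈ E₀, ∀ v ∈ e, v < N) ∧
      (∀ e ∈ E₀, ∀ f ∈ E₀, e ≠ f → (e ∩ f).card ≤ 1) ∧
      (∀ e ∈ E₀, ∀ f ∈ E₀, ∀ g ∈ E₀, e ≠ f → f ≠ g → g ≠ e →
        (e ∩ f).card = 1 → (f ∩ g).card = 1 → (g ∩ e).card = 1 →
          (e ∩ f ∩ g).card = 1) := by
  have hR1 : 1 ≤ R := by omega
  have hQ2 : 2 ≤ Q := by subst hQ; nlinarith
  have hQpow : 1 ≤ Q^(d-1) := Nat.one_le_pow _ _ (by omega)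
  set P : Finset (ℕ × ℕ × ℕ) := S ×ˢ (range (Q^(d-1)) ×ˢ range U) with hP
  set ψ : ℕ × ℕ × ℕ → Finset ℕ :=
    fun p => edgeAP R p.1 (p.2.1 + p.1*(R*p.2.2)) with hψ
  -- basic facts for parameters in P
  have hmemP : ∀ s r u : ℕ, (s, r, u) ∈ P → s ∈ S ∧ r < Q^(d-1) ∧ u < U := by
    intro s r u hp
    rw [hP, Finset.mem_product] at hp
    obtain ⟨h1, h2⟩ := hp
    rw [Finset.mem_product] at h2
    exact ⟨h1, Finset.mem_range.1 h2.1, Finset.mem_range.1 h2.2⟩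
  have hslb : ∀ s ∈ S, Q^(d-1) ≤ s := fun s hs => (good_lb hd hQ2 (hGood s hs)).1
  have hsub : ∀ s ∈ S, s ≤ 2*m*Q^(d-1) := fun s hs => (good_lb hd hQ2 (hGood s hs)).2
  have hspos : ∀ s ∈ S, 1 ≤ s := fun s hs => le_trans hQpow (hslb s hs)
  -- injectivity of ψ on P
  have hinj : Set.InjOn ψ P := by
    rintro ⟨s, r, u⟩ hp ⟨s', r', u'⟩ hp' heq
    obtain ⟨hs, hr, hu⟩ := hmemP _ _ _ hp
    obtain ⟨hs', hr', hu'⟩ := hmemP _ _ _ hp'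
    simp only [hψ] at heq
    have hvmem : r + s*(R*u) ∈ edgeAP R s (r + s*(R*u)) :=
      edgeAP_mem.2 ⟨0, by omega, by ring⟩
    have hwmem : r + s*(R*u) + s*1 ∈ edgeAP R s (r + s*(R*u)) :=
      edgeAP_mem.2 ⟨1, by omega, rfl⟩
    have hvw : r + s*(R*u) ≠ r + s*(R*u) + s*1 := by
      have := hspos s hs; omega
    have hvmem' : r + s*(R*u) ∈ edgeAP R s' (r' + s'*(R*u')) := by
      rw [← heq]; exact hvmem
    have hwmem' : r + s*(R*u) + s*1 ∈ edgeAP R s' (r' + s'*(R*u')) := by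
      rw [← heq]; exact hwmem
    have hss : s = s' := shared_two hQ hd hR1 (hGood s hs) (hGood s' hs') (hspos s hs)
        hvmem hvmem' hwmem hwmem' hvw
    subst hss
    have hru : r = r' ∧ u = u' := by
      refine same_s_param (hspos s hs) hR1 (lt_of_lt_of_le hr (hslb s hs))
        (lt_of_lt_of_le hr' (hslb s hs)) hvmem ?_
      rw [← heq] at hvmem'
      rw [heq] at hvmem
      exact hvmem
    exact Prod.ext rfl (Prod.ext hru.1 hru.2)
  refine ⟨P.image ψ, ?_, ?_, ?_, ?_, ?_⟩
  · rw [Finset.card_image_of_injOn hinj, hP, Finset.card_product, Finset.card_product,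
      Finset.card_range, Finset.card_range]
  · rintro e he
    obtain ⟨⟨s, r, u⟩, hp, rfl⟩ := Finset.mem_image.1 he
    exact edgeAP_card (hspos s (hmemP _ _ _ hp).1)
  · rintro e he v hv
    obtain ⟨⟨s, r, u⟩, hp, rfl⟩ := Finset.mem_image.1 he
    obtain ⟨hs, hr, hu⟩ := hmemP _ _ _ hp
    simp only [hψ] at hv
    obtain ⟨i, hi, hveq⟩ := edgeAP_mem.1 hv
    have hrs : r < s := lt_of_lt_of_le hr (hslb s hs)
    have e2 : R*u + i + 1 ≤ R*U := by
      have e2a : R*(u+1) ≤ R*U := Nat.mul_le_mul_left _ (by omega)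
      have e2b : R*(u+1) = R*u + R := by ring
      omega
    have h1 : v < s * (R*U) := by
      have e0 : s*(R*u + i + 1) = s*(R*u) + s*i + s := by ring
      have e1 : v < s * (R*u + i + 1) := by
        rw [e0, hveq]; linarith
      exact lt_of_lt_of_le e1 (Nat.mul_le_mul_left _ e2)
    have h2 : 3 * (s * (R*U)) ≤ Q^d * U := by
      have step2 : s * (R*U) ≤ (2*m*Q^(d-1)) * (R*U) :=
        Nat.mul_le_mul_right _ (hsub s hs)
      have step3 : 3 * (s*(R*U)) ≤ 3 * ((2*m*Q^(d-1))*(R*U)) :=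
        Nat.mul_le_mul_left _ step2
      have step4 : 3 * ((2*m*Q^(d-1))*(R*U)) = (6*R*m) * Q^(d-1) * U := by ring
      have step5 : (6*R*m) * Q^(d-1) * U = Q^d * U := by
        rw [← hQ]
        have hpw : Q^d = Q^(d-1) * Q := by
          rw [← pow_succ]
          congr 1
          omega
        rw [hpw]; ring
      rw [step4, step5] at step3
      exact step3
    have h4 : 3 * v < N := by
      have h1' : 3 * v < 3 * (s * (R*U)) := by omega
      exact lt_of_lt_of_le h1' (le_trans h2 hUN)
    omega
  · -- linearity
    rintro e he f hf hef
    by_contra hcard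
    have h2 : 2 ≤ (e ∩ f).card := by omega
    obtain ⟨v, hv, w, hw, hvw⟩ := Finset.one_lt_card.1 h2
    obtain ⟨⟨s, r, u⟩, hp, rfl⟩ := Finset.mem_image.1 he
    obtain ⟨⟨s', r', u'⟩, hp', rfl⟩ := Finset.mem_image.1 hf
    obtain ⟨hs, hr, hu⟩ := hmemP _ _ _ hp
    obtain ⟨hs', hr', hu'⟩ := hmemP _ _ _ hp'
    have hv1 := (Finset.mem_inter.1 hv).1
    have hv2 := (Finset.mem_inter.1 hv).2
    have hw1 := (Finset.mem_inter.1 hw).1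
    have hw2 := (Finset.mem_inter.1 hw).2
    simp only [hψ] at hv1 hv2 hw1 hw2
    have hss : s = s' := shared_two hQ hd hR1 (hGood s hs) (hGood s' hs') (hspos s hs)
      hv1 hv2 hw1 hw2 hvw
    subst hss
    have hru : r = r' ∧ u = u' := same_s_param (hspos s hs) hR1
      (lt_of_lt_of_le hr (hslb s hs)) (lt_of_lt_of_le hr' (hslb s hs)) hv1 hv2
    exact hef (by rw [hru.1, hru.2])
  · -- triangle-freeness
    rintro e he f hf g hg hef hfg hge hcef hcfg hcge
    obtain ⟨xu, hxu⟩ := Finset.card_eq_one.1 hcef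
    obtain ⟨xv, hxv⟩ := Finset.card_eq_one.1 hcfg
    obtain ⟨xw, hxw⟩ := Finset.card_eq_one.1 hcge
    have hue : xu ∈ e := (Finset.mem_inter.1 (hxu ▸ Finset.mem_singleton_self xu)).1
    have huf : xu ∈ f := (Finset.mem_inter.1 (hxu ▸ Finset.mem_singleton_self xu)).2
    have hvf : xv ∈ f := (Finset.mem_inter.1 (hxv ▸ Finset.mem_singleton_self xv)).1
    have hvg : xv ∈ g := (Finset.mem_inter.1 (hxv ▸ Finset.mem_singleton_self xv)).2
    have hwg : xw ∈ g := (Finset.mem_inter.1 (hxw ▸ Finset.mem_singleton_self xw)).1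
    have hwe : xw ∈ e := (Finset.mem_inter.1 (hxw ▸ Finset.mem_singleton_self xw)).2
    by_cases hug : xu ∈ g
    · rw [hxu, Finset.singleton_inter_of_mem hug, Finset.card_singleton]
    · exfalso
      have huv : xu ≠ xv := fun h => hug (h ▸ hvg)
      have huw : xu ≠ xw := fun h => hug (h ▸ hwg)
      have hvw : xv ≠ xw := by
        intro h
        have : xv ∈ e := h ▸ hwe
        have : xv ∈ e ∩ f := Finset.mem_inter.2 ⟨this, hvf⟩
        rw [hxu] at this
        exact huv (Finset.mem_singleton.1 this).symm
      obtain ⟨⟨s1, r1, u1⟩, hp1, rfl⟩ := Finset.mem_image.1 he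
      obtain ⟨⟨s2, r2, u2⟩, hp2, rfl⟩ := Finset.mem_image.1 hf
      obtain ⟨⟨s3, r3, u3⟩, hp3, rfl⟩ := Finset.mem_image.1 hg
      obtain ⟨hs1, hr1, hu1⟩ := hmemP _ _ _ hp1
      obtain ⟨hs2, hr2, hu2⟩ := hmemP _ _ _ hp2
      obtain ⟨hs3, hr3, hu3⟩ := hmemP _ _ _ hp3
      simp only [hψ] at hue huf hvf hvg hwg hwe
      obtain ⟨iu1, hiu1, heu1⟩ := edgeAP_mem.1 hue
      obtain ⟨iu2, hiu2, heu2⟩ := edgeAP_mem.1 huf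
      obtain ⟨iv2, hiv2, hev2⟩ := edgeAP_mem.1 hvf
      obtain ⟨iv3, hiv3, hev3⟩ := edgeAP_mem.1 hvg
      obtain ⟨iw3, hiw3, hew3⟩ := edgeAP_mem.1 hwg
      obtain ⟨iw1, hiw1, hew1⟩ := edgeAP_mem.1 hwe
      set a1 := r1 + s1*(R*u1)
      set a2 := r2 + s2*(R*u2)
      set a3 := r3 + s3*(R*u3)
      have zu1 : (xu:ℤ) = a1 + s1*iu1 := by exact_mod_cast heu1
      have zu2 : (xu:ℤ) = a2 + s2*iu2 := by exact_mod_cast heu2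
      have zv2 : (xv:ℤ) = a2 + s2*iv2 := by exact_mod_cast hev2
      have zv3 : (xv:ℤ) = a3 + s3*iv3 := by exact_mod_cast hev3
      have zw3 : (xw:ℤ) = a3 + s3*iw3 := by exact_mod_cast hew3
      have zw1 : (xw:ℤ) = a1 + s1*iw1 := by exact_mod_cast hew1
      set c1 : ℤ := (iw1:ℤ) - iu1 with hc1def
      set c2 : ℤ := (iv2:ℤ) - iu2 with hc2def
      set c3 : ℤ := (iv3:ℤ) - iw3 with hc3def
      have hrel1 : (xw:ℤ) - xu = s1 * c1 := by rw [zu1, zw1, hc1def]; ring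
      have hrel2 : (xv:ℤ) - xu = s2 * c2 := by rw [zu2, zv2, hc2def]; ring
      have hrel3 : (xv:ℤ) - xw = s3 * c3 := by rw [zw3, zv3, hc3def]; ring
      have hc1ne : c1 ≠ 0 := by
        intro h; rw [h, mul_zero] at hrel1
        exact huw (by omega)
      have hc2ne : c2 ≠ 0 := by
        intro h; rw [h, mul_zero] at hrel2
        exact huv (by omega)
      have hc3ne : c3 ≠ 0 := by
        intro h; rw [h, mul_zero] at hrel3
        exact hvw (by omega)
      have hrel : c1 * s1 + (-c2) * s2 + c3 * s3 = 0 := by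
        have : ((xw:ℤ) - xu) - ((xv:ℤ) - xu) + ((xv:ℤ) - xw) = 0 := by ring
        rw [hrel1, hrel2, hrel3] at this
        linarith
      have hs123 : s1 = s2 ∧ s2 = s3 := P3 hQ hd hR1 (hGood s1 hs1) (hGood s2 hs2)
        (hGood s3 hs3) c1 (-c2) c3 hc1ne (by simpa using hc2ne) hc3ne
        (by omega) (by omega) (by omega) hrel
      obtain ⟨h12, _⟩ := hs123
      subst h12
      have hru : r1 = r2 ∧ u1 = u2 := same_s_param (hspos s1 hs1) hR1
        (lt_of_lt_of_le hr1 (hslb s1 hs1)) (lt_of_lt_of_le hr2 (hslb s1 hs1)) hue huf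
      exact hef (by rw [hru.1, hru.2])

lemma buildS (d m Q : ℕ) (hd : 1 ≤ d) (hm : 1 ≤ m) (hQm : 2*m < Q) :
    ∃ (σ τ : ℕ) (S : Finset ℕ),
      (∀ s ∈ S, Good d m Q σ τ s) ∧
      m^d ≤ (d*m) * (d*(m^2)) * S.card := by
  classical
  set extY : (Fin d → ℕ) → ℕ → ℕ :=
    fun y j => if h : j < d then y ⟨j, h⟩ else 0 with hext
  set B : Finset (Fin d → ℕ) := Fintype.piFinset (fun _ => Finset.Icc 1 m) with hB
  have hBmem : ∀ y ∈ B, ∀ j, j < d → 1 ≤ extY y j ∧ extY y j ≤ m := by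
    intro y hy j hj
    have := (Fintype.mem_piFinset.1 hy) ⟨j, hj⟩
    rw [Finset.mem_Icc] at this
    simp only [hext, dif_pos hj]
    exact this
  have hBcard : B.card = m^d := by
    rw [hB, Fintype.card_piFinset]
    simp [Nat.card_Icc]
  set key : (Fin d → ℕ) → ℕ × ℕ :=
    fun y => (∑ j ∈ range d, extY y j, ∑ j ∈ range d, (extY y j)^2) with hkey
  set T : Finset (ℕ × ℕ) := Finset.Icc d (d*m) ×ˢ Finset.Icc d (d*(m^2)) with hT
  have hmaps : ∀ y ∈ B, key y ∈ T := by
    intro y hy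
    rw [hT, Finset.mem_product, Finset.mem_Icc, Finset.mem_Icc]
    have h1 : ∑ j ∈ range d, extY y j ≥ ∑ j ∈ range d, 1 :=
      Finset.sum_le_sum (fun j hj => (hBmem y hy j (Finset.mem_range.1 hj)).1)
    have h2 : ∑ j ∈ range d, extY y j ≤ ∑ j ∈ range d, m :=
      Finset.sum_le_sum (fun j hj => (hBmem y hy j (Finset.mem_range.1 hj)).2)
    have h3 : ∑ j ∈ range d, (extY y j)^2 ≥ ∑ j ∈ range d, 1 :=
      Finset.sum_le_sum (fun j hj => by
        have := (hBmem y hy j (Finset.mem_range.1 hj)).1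
        nlinarith)
    have h4 : ∑ j ∈ range d, (extY y j)^2 ≤ ∑ j ∈ range d, m^2 :=
      Finset.sum_le_sum (fun j hj => by
        have h5 := (hBmem y hy j (Finset.mem_range.1 hj)).2
        exact Nat.pow_le_pow_left h5 2)
    simp only [Finset.sum_const, Finset.card_range, smul_eq_mul, mul_one] at h1 h2 h3 h4
    exact ⟨⟨h1, h2⟩, ⟨h3, h4⟩⟩
  have hfiber : B.card = ∑ p ∈ T, (B.filter (fun y => key y = p)).card :=
    Finset.card_eq_sum_card_fiberwise hmaps
  have hTne : T.Nonempty := by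
    refine ⟨(d, d), ?_⟩
    rw [hT, Finset.mem_product, Finset.mem_Icc, Finset.mem_Icc]
    constructor
    · exact ⟨le_refl d, Nat.le_mul_of_pos_right d (by omega)⟩
    · exact ⟨le_refl d, Nat.le_mul_of_pos_right d (by positivity)⟩
  have hexists : ∃ p ∈ T, B.card ≤ T.card * (B.filter (fun y => key y = p)).card := by
    refine Finset.exists_le_of_sum_le hTne (le_of_eq ?_)
    calc ∑ _p ∈ T, B.card = T.card * B.card := by
          rw [Finset.sum_const, smul_eq_mul]
      _ = T.card * ∑ p ∈ T, (B.filter (fun y => key y = p)).card := by rw [← hfiber]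
      _ = ∑ p ∈ T, T.card * (B.filter (fun y => key y = p)).card := by
          rw [Finset.mul_sum]
  obtain ⟨⟨σ, τ⟩, hpT, hcard⟩ := hexists
  set F : Finset (Fin d → ℕ) := B.filter (fun y => key y = (σ, τ)) with hF
  set val : (Fin d → ℕ) → ℕ := fun y => ∑ j ∈ range d, extY y j * Q^j with hval
  have hvalinj : Set.InjOn val F := by
    intro y hy y' hy' heq
    have hyB : y ∈ B := (Finset.mem_filter.1 hy).1
    have hy'B : y' ∈ B := (Finset.mem_filter.1 hy').1
    have hdig : ∀ j, j < d → ((extY y j : ℤ) - extY y' j) = 0 := by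
      refine nocarry Q d _ ?_ ?_
      · intro j hj
        have b1 := hBmem y hyB j hj
        have b2 := hBmem y' hy'B j hj
        have : ((extY y j : ℤ) - extY y' j).natAbs ≤ m := by omega
        omega
      · have expand : ∑ j ∈ range d, ((extY y j : ℤ) - extY y' j) * (Q:ℤ)^j
            = (∑ j ∈ range d, (extY y j:ℤ)*(Q:ℤ)^j)
              - ∑ j ∈ range d, (extY y' j:ℤ)*(Q:ℤ)^j := by
          rw [← Finset.sum_sub_distrib]
          exact Finset.sum_congr rfl fun j _ => by ring
        have c1 : ((val y : ℕ) : ℤ) = ∑ j ∈ range d, (extY y j : ℤ) * (Q:ℤ)^j := by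
          rw [hval]; push_cast; ring
        have c2 : ((val y' : ℕ) : ℤ) = ∑ j ∈ range d, (extY y' j : ℤ) * (Q:ℤ)^j := by
          rw [hval]; push_cast; ring
        rw [expand, ← c1, ← c2, heq]; ring
    funext i
    have := hdig i.val i.isLt
    have h2 : extY y i.val = extY y' i.val := by omega
    simp only [hext, dif_pos i.isLt] at h2
    simpa using h2
  refine ⟨σ, τ, F.image val, ?_, ?_⟩
  · intro s hs
    obtain ⟨y, hy, rfl⟩ := Finset.mem_image.1 hs
    have hyB : y ∈ B := (Finset.mem_filter.1 hy).1
    have hkeyy : key y = (σ, τ) := (Finset.mem_filter.1 hy).2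
    refine ⟨extY y, fun j hj => hBmem y hyB j hj, ?_, ?_, rfl⟩
    · exact congrArg Prod.fst hkeyy
    · exact congrArg Prod.snd hkeyy
  · have hScard : (F.image val).card = F.card := Finset.card_image_of_injOn hvalinj
    rw [hScard]
    have hTcard : T.card ≤ (d*m) * (d*(m^2)) := by
      rw [hT, Finset.card_product, Nat.card_Icc, Nat.card_Icc]
      have a1 : d * m + 1 - d ≤ d * m := by
        have : d ≤ d * m := Nat.le_mul_of_pos_right d (by omega)
        omega
      have a2 : d * (m^2) + 1 - d ≤ d * (m^2) := by
        have : d ≤ d * (m^2) := Nat.le_mul_of_pos_right d (by positivity)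
        omega
      exact Nat.mul_le_mul a1 a2
    calc m^d = B.card := hBcard.symm
      _ ≤ T.card * F.card := hcard
      _ ≤ (d*m) * (d*(m^2)) * F.card := Nat.mul_le_mul_right _ hTcard

lemma liftE (N R : ℕ) (E₀ : Finset (Finset ℕ)) (hb : ∀ e ∈ E₀, ∀ v ∈ e, v < N)
    (hcard : ∀ e ∈ E₀, e.card = R)
    (hlin : ∀ e ∈ E₀, ∀ f ∈ E₀, e ≠ f → (e ∩ f).card ≤ 1)
    (htri : ∀ e ∈ E₀, ∀ f ∈ E₀, ∀ g ∈ E₀, e ≠ f → f ≠ g → g ≠ e →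
        (e ∩ f).card = 1 → (f ∩ g).card = 1 → (g ∩ e).card = 1 →
          (e ∩ f ∩ g).card = 1) :
    ∃ E : Finset (Finset (Fin N)), E.card = E₀.card ∧ (∀ e ∈ E, e.card = R) ∧
      (∀ e ∈ E, ∀ f ∈ E, e ≠ f → (e ∩ f).card ≤ 1) ∧
      (∀ e ∈ E, ∀ f ∈ E, ∀ g ∈ E, e ≠ f → f ≠ g → g ≠ e →
        (e ∩ f).card = 1 → (f ∩ g).card = 1 → (g ∩ e).card = 1 →
          (e ∩ f ∩ g).card = 1) := by
  classical
  set φ : Finset ℕ → Finset (Fin N) :=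
    fun e => (e.filter (· < N)).attachFin (fun v hv => (Finset.mem_filter.1 hv).2) with hφ
  have hmemφ : ∀ (e : Finset ℕ) (a : Fin N), a ∈ φ e ↔ (a : ℕ) ∈ e := by
    intro e a
    rw [hφ]
    simp only [Finset.mem_attachFin, Finset.mem_filter]
    exact ⟨fun h => h.1, fun h => ⟨h, a.isLt⟩⟩
  have hfilter : ∀ e ∈ E₀, e.filter (· < N) = e := by
    intro e he
    apply Finset.filter_true_of_mem
    intro v hv; exact hb e he v hv
  have hcardφ : ∀ e ∈ E₀, (φ e).card = e.card := by
    intro e he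
    rw [hφ]
    simp only [Finset.card_attachFin]
    rw [hfilter e he]
  have hinterφ : ∀ e f : Finset ℕ, φ e ∩ φ f = φ (e ∩ f) := by
    intro e f
    ext a
    rw [Finset.mem_inter, hmemφ, hmemφ, hmemφ, Finset.mem_inter]
  have hinjφ : ∀ e ∈ E₀, ∀ f ∈ E₀, φ e = φ f → e = f := by
    intro e he f hf h
    ext v
    constructor
    · intro hv
      have hvN : v < N := hb e he v hv
      have : (⟨v, hvN⟩ : Fin N) ∈ φ e := (hmemφ e _).2 hv
      rw [h] at this
      exact (hmemφ f _).1 this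
    · intro hv
      have hvN : v < N := hb f hf v hv
      have : (⟨v, hvN⟩ : Fin N) ∈ φ f := (hmemφ f _).2 hv
      rw [← h] at this
      exact (hmemφ e _).1 this
  have hintercard : ∀ e ∈ E₀, ∀ f ∈ E₀, (φ e ∩ φ f).card = (e ∩ f).card := by
    intro e he f hf
    rw [hinterφ, hφ]
    simp only [Finset.card_attachFin]
    congr 1
    apply Finset.filter_true_of_mem
    intro v hv
    exact hb e he v (Finset.mem_inter.1 hv).1
  have hintercard3 : ∀ e ∈ E₀, ∀ f ∈ E₀, ∀ g ∈ E₀,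
      (φ e ∩ φ f ∩ φ g).card = (e ∩ f ∩ g).card := by
    intro e he f hf g hg
    rw [hinterφ, hinterφ, hφ]
    simp only [Finset.card_attachFin]
    congr 1
    apply Finset.filter_true_of_mem
    intro v hv
    exact hb e he v (Finset.mem_inter.1 (Finset.mem_inter.1 hv).1).1
  refine ⟨E₀.image φ, ?_, ?_, ?_, ?_⟩
  · exact Finset.card_image_of_injOn (fun e he f hf h => hinjφ e he f hf h)
  · rintro e he
    obtain ⟨e₀, he₀, rfl⟩ := Finset.mem_image.1 he
    rw [hcardφ e₀ he₀]
    exact hcard e₀ he₀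
  · rintro e he f hf hef
    obtain ⟨e₀, he₀, rfl⟩ := Finset.mem_image.1 he
    obtain ⟨f₀, hf₀, rfl⟩ := Finset.mem_image.1 hf
    have hne : e₀ ≠ f₀ := fun h => hef (by rw [h])
    rw [hintercard e₀ he₀ f₀ hf₀]
    exact hlin e₀ he₀ f₀ hf₀ hne
  · rintro e he f hf g hg hef hfg hge h1 h2 h3
    obtain ⟨e₀, he₀, rfl⟩ := Finset.mem_image.1 he
    obtain ⟨f₀, hf₀, rfl⟩ := Finset.mem_image.1 hf
    obtain ⟨g₀, hg₀, rfl⟩ := Finset.mem_image.1 hg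
    rw [hintercard e₀ he₀ f₀ hf₀] at h1
    rw [hintercard f₀ hf₀ g₀ hg₀] at h2
    rw [hintercard g₀ hg₀ e₀ he₀] at h3
    rw [hintercard3 e₀ he₀ f₀ hf₀ g₀ hg₀]
    exact htri e₀ he₀ f₀ hf₀ g₀ hg₀ (fun h => hef (by rw [h])) (fun h => hfg (by rw [h]))
      (fun h => hge (by rw [h])) h1 h2 h3

set_option maxHeartbeats 2000000 in
theorem stmt16 (N R : ℕ) (hR3 : 3 ≤ R) (hN3 : 3 ≤ N) (hRN : R ≤ N)
    (hlog : Real.log N ≤ (R : ℝ)) :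
    ∃ E : Finset (Finset (Fin N)),
      (∀ e ∈ E, e.card = R) ∧
      (N : ℝ) ^ 2 / (R : ℝ) ^ (8 * Real.sqrt (Real.logb R N)) ≤ (E.card : ℝ) ∧
      (∀ e ∈ E, ∀ f ∈ E, e ≠ f → (e ∩ f).card ≤ 1) ∧
      (∀ e ∈ E, ∀ f ∈ E, ∀ g ∈ E, e ≠ f → f ≠ g → g ≠ e →
        (e ∩ f).card = 1 → (f ∩ g).card = 1 → (g ∩ e).card = 1 →
          (e ∩ f ∩ g).card = 1) := by
  have hRpos : (0:ℝ) < R := by positivity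
  have hppos : (0:ℝ) < (R:ℝ) ^ (8 * Real.sqrt (Real.logb R N)) :=
    Real.rpow_pos_of_pos hRpos _
  by_cases htriv : (N:ℝ)^2 ≤ (R:ℝ) ^ (8 * Real.sqrt (Real.logb R N))
  · -- trivial case : one edge suffices
    obtain ⟨e, _, hecard⟩ := Finset.exists_subset_card_eq (s := (Finset.univ : Finset (Fin N))) (n := R)
      (by simpa using hRN)
    refine ⟨{e}, ?_, ?_, ?_, ?_⟩
    · intro f hf; rw [Finset.mem_singleton.1 hf]; exact hecard
    · rw [Finset.card_singleton]
      push_cast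
      rw [div_le_one hppos]
      exact htriv
    · intro f hf g hg hfg
      exact absurd (by rw [Finset.mem_singleton.1 hf, Finset.mem_singleton.1 hg]) hfg
    · intro f hf g hg _ _ hfg _ _ _ _ _
      exact absurd (by rw [Finset.mem_singleton.1 hf, Finset.mem_singleton.1 hg]) hfg
  · -- main case
    push_neg at htriv
    have hR1 : (1:ℝ) < (R:ℝ) := by exact_mod_cast (by omega : 1 < R)
    have hN1 : (1:ℝ) ≤ (N:ℝ) := by exact_mod_cast (by omega : 1 ≤ N)
    set x : ℝ := Real.logb R N with hxdef
    have hx0 : 0 ≤ x := Real.logb_nonneg hR1 hN1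
    have hNx : (N:ℝ) = (R:ℝ) ^ x := (Real.rpow_logb hRpos (by linarith) (by linarith)).symm
    set t : ℝ := Real.sqrt x with htdef
    have ht0 : 0 ≤ t := Real.sqrt_nonneg x
    have htx : t^2 = x := Real.sq_sqrt hx0
    -- t > 4
    have ht4 : 4 < t := by
      have h1 : (R:ℝ) ^ (8*t) < (R:ℝ)^(2*x) := by
        calc (R:ℝ)^(8*t) < (N:ℝ)^2 := htriv
          _ = (R:ℝ)^(2*x) := by
            rw [hNx, ← Real.rpow_natCast ((R:ℝ)^x) 2, ← Real.rpow_mul (le_of_lt hRpos)]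
            norm_num [mul_comm]
      have h2 : 8*t < 2*x := (Real.rpow_lt_rpow_left_iff hR1).1 h1
      nlinarith
    have hx16 : 16 < x := by nlinarith
    -- R is fairly large
    have hlogR1 : 1 ≤ Real.log R := by
      rw [Real.le_log_iff_exp_le hRpos]
      have h9 := Real.exp_one_lt_d9
      have h3 : (3:ℝ) ≤ (R:ℝ) := by exact_mod_cast hR3
      linarith
    have hlogRpos : 0 < Real.log R := by linarith
    have hlogN : Real.log N = x * Real.log R := by
      rw [hxdef, Real.logb, div_mul_cancel₀ _ (ne_of_gt hlogRpos)]
    have h16R : 16 * Real.log R < (R:ℝ) := by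
      have h1 : 16 * Real.log R < Real.log N := by
        rw [hlogN]; nlinarith
      linarith
    have hR17 : (17:ℝ) ≤ (R:ℝ) := by
      have h1 : (16:ℝ) < R := by nlinarith
      have h2 : (16:ℕ) < R := by exact_mod_cast h1
      exact_mod_cast (by omega : (17:ℕ) ≤ R)
    have hlogR2 : 2 ≤ Real.log R := by
      rw [Real.le_log_iff_exp_le hRpos]
      have he1 := Real.exp_one_lt_d9
      have he2 : Real.exp 2 = Real.exp 1 * Real.exp 1 := by
        rw [← Real.exp_add]; norm_num
      nlinarith [Real.exp_pos 1]
    have hR33 : (33:ℝ) ≤ (R:ℝ) := by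
      have h1 : (32:ℝ) < R := by nlinarith
      have h2 : (32:ℕ) < R := by exact_mod_cast h1
      exact_mod_cast (by omega : (33:ℕ) ≤ R)
    have hxR2 : 2 * x ≤ (R:ℝ) := by nlinarith
    -- parameters
    set d : ℕ := ⌈t⌉₊ with hddef
    have hdt : t ≤ (d:ℝ) := Nat.le_ceil t
    have hdt1 : (d:ℝ) < t + 1 := Nat.ceil_lt_add_one ht0
    have hd5 : 5 ≤ d := by
      have h1 : (4:ℝ) < (d:ℝ) := lt_of_lt_of_le ht4 hdt
      have h2 : (4:ℕ) < d := by exact_mod_cast h1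
      omega
    have hdpos : (0:ℝ) < (d:ℝ) := by
      have : (0:ℕ) < d := by omega
      exact_mod_cast this
    set z : ℝ := (R:ℝ) ^ (x / (d:ℝ)) with hzdef
    have hzpos : 0 < z := Real.rpow_pos_of_pos hRpos _
    have hsq : t*t = x := by rw [← htx]; ring
    have hxD3 : 3 ≤ x / (d:ℝ) := by
      rw [le_div_iff₀ hdpos]
      have h1 : (0:ℝ) ≤ (t-4)*t := mul_nonneg (by linarith) ht0
      have h2 : (t-4)*t = t*t - 4*t := by ring
      linarith
    have hxDt : x / (d:ℝ) ≤ t := by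
      rw [div_le_iff₀ hdpos]
      have h1 : t*t ≤ t*(d:ℝ) := mul_le_mul_of_nonneg_left hdt ht0
      linarith
    have hR3z : (R:ℝ)^(3:ℕ) ≤ z := by
      have h1 : (R:ℝ)^((3:ℕ):ℝ) ≤ (R:ℝ)^(x/(d:ℝ)) := by
        apply (Real.rpow_le_rpow_left_iff hR1).2
        push_cast
        exact hxD3
      rwa [Real.rpow_natCast] at h1
    have hRR : (24:ℝ) ≤ (R:ℝ)*(R:ℝ) := by
      have h1 : (33:ℝ)*33 ≤ (R:ℝ)*(R:ℝ) :=
        mul_le_mul hR33 hR33 (by norm_num) (by positivity)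
      linarith
    have hz24R : 24 * (R:ℝ) ≤ z := by
      have h1 : 24 * (R:ℝ) ≤ ((R:ℝ)*(R:ℝ))*(R:ℝ) :=
        mul_le_mul_of_nonneg_right hRR (le_of_lt hRpos)
      have h2 : ((R:ℝ)*(R:ℝ))*(R:ℝ) = (R:ℝ)^(3:ℕ) := by ring
      linarith [hR3z]
    set m : ℕ := ⌊z / (12*(R:ℝ))⌋₊ with hmdef
    have hm_up : (m:ℝ) ≤ z / (12*R) := Nat.floor_le (by positivity)
    have h24one : (1:ℝ) ≤ z / (24*R) := by
      rw [le_div_iff₀ (by positivity)]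
      linarith
    have hm_low : z / (24*(R:ℝ)) ≤ (m:ℝ) := by
      have h1 : z/(12*(R:ℝ)) - 1 < (m:ℝ) := Nat.sub_one_lt_floor _
      have h2 : z/(12*(R:ℝ)) = 2 * (z/(24*R)) := by ring
      linarith
    have hm1 : 1 ≤ m := by
      have : (1:ℝ) ≤ (m:ℝ) := le_trans h24one hm_low
      exact_mod_cast this
    set Q : ℕ := 6*R*m with hQdef
    have hQr : (Q:ℝ) = 6*(R:ℝ)*(m:ℝ) := by rw [hQdef]; push_cast; ring
    have hQpos : 0 < Q := by
      rw [hQdef]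
      exact Nat.mul_pos (by omega : 0 < 6*R) (by omega : 0 < m)
    have hQz2 : (Q:ℝ) ≤ z/2 := by
      rw [hQr]
      have h1 : 6*(R:ℝ)*(m:ℝ) ≤ 6*(R:ℝ)*(z/(12*R)) := by
        apply mul_le_mul_of_nonneg_left hm_up (by positivity)
      have h2 : 6*(R:ℝ)*(z/(12*(R:ℝ))) = z/2 := by
        field_simp
        ring
      linarith
    have hzd : z^(d:ℕ) = (N:ℝ) := by
      rw [hzdef, ← Real.rpow_natCast ((R:ℝ) ^ (x / (d:ℝ))) d, ← Real.rpow_mul (le_of_lt hRpos),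
        div_mul_cancel₀ x (ne_of_gt hdpos), ← hNx]
    have hQd_le : ((Q:ℕ):ℝ)^(d:ℕ) ≤ (N:ℝ)/2 := by
      have h1 : ((Q:ℕ):ℝ)^(d:ℕ) ≤ (z/2)^(d:ℕ) := by
        apply pow_le_pow_left₀ (by positivity) hQz2
      have h2 : (z/2)^(d:ℕ) = z^(d:ℕ)/2^(d:ℕ) := div_pow z 2 d
      have h3 : (2:ℝ)^(1:ℕ) ≤ (2:ℝ)^(d:ℕ) := pow_le_pow_right₀ one_le_two (by omega)
      have h4 : z^(d:ℕ)/2^(d:ℕ) ≤ (N:ℝ)/2 := by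
        rw [hzd]
        apply div_le_div_of_nonneg_left (by positivity) (by positivity)
        simpa using h3
      linarith
    have hQdN2 : 2 * Q^d ≤ N := by
      have h1 : ((2 * Q^d : ℕ):ℝ) ≤ (N:ℝ) := by
        push_cast
        linarith
      exact_mod_cast h1
    have hQdN : Q^d ≤ N := by omega
    set U : ℕ := N / Q^d with hUdef
    have hQdpos : 0 < Q^d := pow_pos hQpos d
    have hU1 : 1 ≤ U := (Nat.one_le_div_iff hQdpos).2 hQdN
    have hUN : Q^d * U ≤ N := by
      rw [hUdef, mul_comm]
      exact Nat.div_mul_le_self N (Q^d)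
    have hN2U : N ≤ 2 * (Q^d * U) := by
      have hdm := Nat.div_add_mod N (Q^d)
      have hmod : N % Q^d < Q^d := Nat.mod_lt _ hQdpos
      have hle : Q^d ≤ Q^d * U := Nat.le_mul_of_pos_right _ hU1
      rw [← hUdef] at hdm
      omega
    -- build the hypergraph
    have hQm2 : 2*m < Q := by
      rw [hQdef]
      have h1 : 6*3*m ≤ 6*R*m := Nat.mul_le_mul_right m (by omega)
      omega
    obtain ⟨σ, τ, S, hGood, hScount⟩ := buildS d m Q (by omega) hm1 hQm2
    obtain ⟨E₀, hE₀card, hE₀unif, hE₀bound, hE₀lin, hE₀tri⟩ :=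
      buildE N R d m Q U σ τ S rfl (by omega) hR3 hm1 hUN hGood
    obtain ⟨E, hEcard, hEunif, hElin, hEtri⟩ := liftE N R E₀ hE₀bound hE₀unif hE₀lin hE₀tri
    refine ⟨E, hEunif, ?_, hElin, hEtri⟩
    -- the counting estimate
    rw [div_le_iff₀ hppos]
    set p : ℝ := (R:ℝ) ^ (8*t) with hpdef
    -- KEY inequality
    have hmm1 : (1:ℝ) ≤ (m:ℝ) := by exact_mod_cast hm1
    have key : 12 * (N:ℝ) * (d:ℝ)^2 * (R:ℝ) ≤ (m:ℝ)^(d-4) * p := by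
      have s1 : (R:ℝ)^(x/(d:ℝ) - 3) ≤ (m:ℝ) := by
        have e1 : (R:ℝ)^(x/(d:ℝ) - 3) = z / (R:ℝ)^(3:ℕ) := by
          rw [hzdef, Real.rpow_sub hRpos]
          congr 1
          rw [← Real.rpow_natCast (R:ℝ) 3]
          norm_num
        rw [e1]
        have e2 : z / (R:ℝ)^(3:ℕ) ≤ z / (24*(R:ℝ)) := by
          apply div_le_div_of_nonneg_left (le_of_lt hzpos) (by positivity)
          · nlinarith
        linarith
      have s2 : (R:ℝ)^((x/(d:ℝ) - 3)*((d:ℝ)-4)) ≤ (m:ℝ)^(d-4) := by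
        have e1 : ((R:ℝ)^(x/(d:ℝ)-3))^((d-4 : ℕ)) ≤ (m:ℝ)^(d-4) :=
          pow_le_pow_left₀ (by positivity) s1 _
        have e2 : ((R:ℝ)^(x/(d:ℝ)-3))^((d-4:ℕ)) = (R:ℝ)^((x/(d:ℝ)-3)*((d:ℝ)-4)) := by
          rw [← Real.rpow_natCast ((R:ℝ)^(x/(d:ℝ)-3)) (d-4), ← Real.rpow_mul (le_of_lt hRpos)]
          congr 1
          rw [Nat.cast_sub (by omega)]
          norm_num
        rw [← e2]
        exact e1
      have s3 : 12 * (d:ℝ)^2 ≤ (R:ℝ)^((2:ℕ)) := by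
        have hd54 : (d:ℝ) ≤ (5/4)*t := by linarith
        have hdsq : (d:ℝ)^2 ≤ ((5/4)*t)^2 := pow_le_pow_left₀ (le_of_lt hdpos) hd54 2
        have hexp : ((5/4)*t)^2 = (25/16)*(t*t) := by ring
        have h3 : 12*(d:ℝ)^2 ≤ (75/4)*x := by
          rw [hexp, hsq] at hdsq
          linarith
        have h4 : (75/4)*x ≤ (75/8)*(R:ℝ) := by linarith
        have h5 : (75/8)*(R:ℝ) ≤ (R:ℝ)*(R:ℝ) := by
          have h6 : (0:ℝ) ≤ ((R:ℝ) - 75/8)*(R:ℝ) :=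
            mul_nonneg (by linarith) (le_of_lt hRpos)
          have h7 : ((R:ℝ) - 75/8)*(R:ℝ) = (R:ℝ)*(R:ℝ) - (75/8)*(R:ℝ) := by ring
          linarith
        have h8 : (R:ℝ)*(R:ℝ) = (R:ℝ)^(2:ℕ) := by ring
        linarith
      have s4 : x + 3 ≤ (x/(d:ℝ) - 3)*((d:ℝ)-4) + 8*t := by
        have hxDD : (x/(d:ℝ)) * (d:ℝ) = x := div_mul_cancel₀ x (ne_of_gt hdpos)
        have expand : (x/(d:ℝ) - 3)*((d:ℝ)-4)
            = (x/(d:ℝ))*(d:ℝ) - 4*(x/(d:ℝ)) - 3*(d:ℝ) + 12 := by ring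
        rw [expand, hxDD]
        linarith
      have s5 : 12 * (N:ℝ) * (d:ℝ)^2 * (R:ℝ) ≤ (R:ℝ)^(((2:ℕ)):ℝ) * ((R:ℝ)^x * (R:ℝ)^(1:ℝ)) := by
        have e1 : (R:ℝ)^(((2:ℕ)):ℝ) = (R:ℝ)^((2:ℕ)) := Real.rpow_natCast _ 2
        have e2 : (R:ℝ)^(1:ℝ) = (R:ℝ) := Real.rpow_one _
        rw [e1, e2, ← hNx]
        have e3 : 12 * (N:ℝ) * (d:ℝ)^2 * (R:ℝ) = (12*(d:ℝ)^2) * ((N:ℝ)*(R:ℝ)) := by ring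
        have e4 : (12*(d:ℝ)^2) * ((N:ℝ)*(R:ℝ)) ≤ (R:ℝ)^(2:ℕ) * ((N:ℝ)*(R:ℝ)) :=
          mul_le_mul_of_nonneg_right s3 (by positivity)
        rw [e3]
        linarith [e4]
      have s6 : (R:ℝ)^(((2:ℕ)):ℝ) * ((R:ℝ)^x * (R:ℝ)^(1:ℝ)) = (R:ℝ)^(x+3) := by
        rw [← Real.rpow_add hRpos, ← Real.rpow_add hRpos]
        congr 1
        norm_num
        ring
      have s7 : (R:ℝ)^(x+3) ≤ (R:ℝ)^((x/(d:ℝ)-3)*((d:ℝ)-4) + 8*t) :=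
        (Real.rpow_le_rpow_left_iff hR1).2 s4
      have s8 : (R:ℝ)^((x/(d:ℝ)-3)*((d:ℝ)-4) + 8*t)
          = (R:ℝ)^((x/(d:ℝ)-3)*((d:ℝ)-4)) * p := by
        rw [hpdef, ← Real.rpow_add hRpos]
      have s9 : (R:ℝ)^((x/(d:ℝ)-3)*((d:ℝ)-4)) * p ≤ (m:ℝ)^(d-4) * p :=
        mul_le_mul_of_nonneg_right s2 (le_of_lt hppos)
      calc 12 * (N:ℝ) * (d:ℝ)^2 * (R:ℝ)
          ≤ (R:ℝ)^(((2:ℕ)):ℝ) * ((R:ℝ)^x * (R:ℝ)^(1:ℝ)) := s5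
        _ = (R:ℝ)^(x+3) := s6
        _ ≤ (R:ℝ)^((x/(d:ℝ)-3)*((d:ℝ)-4) + 8*t) := s7
        _ = (R:ℝ)^((x/(d:ℝ)-3)*((d:ℝ)-4)) * p := s8
        _ ≤ (m:ℝ)^(d-4) * p := s9
    -- assemble the count
    have f1 : (E.card:ℝ) = (S.card:ℝ) * ((Q:ℝ)^(d-1) * (U:ℝ)) := by
      rw [hEcard, hE₀card]
      push_cast
      ring
    have f2 : (m:ℝ)^d ≤ (((d:ℝ))*(m:ℝ)) * (((d:ℝ))*((m:ℝ)^2)) * (S.card:ℝ) := by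
      exact_mod_cast hScount
    have f3 : (N:ℝ) ≤ 2*((Q:ℝ)^d * (U:ℝ)) := by exact_mod_cast hN2U
    have hmsplit : (m:ℝ)^(4:ℕ) * (m:ℝ)^(d-4) = (m:ℝ)^d := by
      rw [← pow_add]
      congr 1
      omega
    have hqsplit : (Q:ℝ)^d = (Q:ℝ)^(d-1) * (Q:ℝ) := by
      rw [← pow_succ]
      congr 1
      omega
    have B1 : (m:ℝ)^(4:ℕ) * (12 * (N:ℝ) * (d:ℝ)^2 * (R:ℝ)) ≤ (m:ℝ)^d * p := by
      have := mul_le_mul_of_nonneg_left key (by positivity : (0:ℝ) ≤ (m:ℝ)^(4:ℕ))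
      calc (m:ℝ)^(4:ℕ) * (12 * (N:ℝ) * (d:ℝ)^2 * (R:ℝ))
          ≤ (m:ℝ)^(4:ℕ) * ((m:ℝ)^(d-4) * p) := this
        _ = ((m:ℝ)^(4:ℕ) * (m:ℝ)^(d-4)) * p := by ring
        _ = (m:ℝ)^d * p := by rw [hmsplit]
    have B2 : (m:ℝ)^d * p ≤ (((d:ℝ))*(m:ℝ)) * (((d:ℝ))*((m:ℝ)^2)) * (S.card:ℝ) * p :=
      mul_le_mul_of_nonneg_right f2 (le_of_lt hppos)
    have C2 : 12*(R:ℝ)*(m:ℝ)*(N:ℝ) ≤ (S.card:ℝ) * p := by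
      have hmm0 : (0:ℝ) < (m:ℝ) := by linarith
      have hdm_pos : (0:ℝ) < ((d:ℝ)*(m:ℝ)) * ((d:ℝ)*((m:ℝ)^2)) :=
        mul_pos (mul_pos hdpos hmm0) (mul_pos hdpos (by positivity))
      have e1 : (((d:ℝ))*(m:ℝ)) * (((d:ℝ))*((m:ℝ)^2)) * (12*(R:ℝ)*(m:ℝ)*(N:ℝ))
          = (m:ℝ)^(4:ℕ) * (12 * (N:ℝ) * (d:ℝ)^2 * (R:ℝ)) := by ring
      have e2 : (((d:ℝ))*(m:ℝ)) * (((d:ℝ))*((m:ℝ)^2)) * (12*(R:ℝ)*(m:ℝ)*(N:ℝ))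
          ≤ (((d:ℝ))*(m:ℝ)) * (((d:ℝ))*((m:ℝ)^2)) * ((S.card:ℝ) * p) := by
        rw [e1]
        calc (m:ℝ)^(4:ℕ) * (12 * (N:ℝ) * (d:ℝ)^2 * (R:ℝ)) ≤ (m:ℝ)^d * p := B1
          _ ≤ (((d:ℝ))*(m:ℝ)) * (((d:ℝ))*((m:ℝ)^2)) * (S.card:ℝ) * p := B2
          _ = (((d:ℝ))*(m:ℝ)) * (((d:ℝ))*((m:ℝ)^2)) * ((S.card:ℝ) * p) := by ring
      exact le_of_mul_le_mul_left e2 hdm_pos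
    have hQU0 : (0:ℝ) ≤ (Q:ℝ)^(d-1) * (U:ℝ) := by positivity
    calc (N:ℝ)^2 = (N:ℝ) * (N:ℝ) := by ring
      _ ≤ (N:ℝ) * (2*((Q:ℝ)^d * (U:ℝ))) := mul_le_mul_of_nonneg_left f3 (by positivity)
      _ = (12*(R:ℝ)*(m:ℝ)*(N:ℝ)) * ((Q:ℝ)^(d-1) * (U:ℝ)) := by
          rw [hqsplit, hQr]; ring
      _ ≤ ((S.card:ℝ) * p) * ((Q:ℝ)^(d-1) * (U:ℝ)) :=
          mul_le_mul_of_nonneg_right C2 hQU0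
      _ = ((S.card:ℝ) * ((Q:ℝ)^(d-1) * (U:ℝ))) * p := by ring
      _ = (E.card:ℝ) * p := by rw [f1]
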